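/- Let n ≥ 2 and let A be an n×n matrix over a commutative ring R. Then det(A) · det(A_{2..n−1, 2..n−1}) = det(A_{1..n−1, 1..n−1}) · det(A_{2..n, 2..n}) − det(A_{2..n, 1..n−1}) · det(A_{1..n−1, 2..n}). (Here, when n = 2, the determinant of the empty 0×0 matrix A_{2..1,2..1} is 1.) This is the Desnanot–Jacobi condensation identity on which Dodgson's method is based. -/

import Mathlib

open Matrix

section Block
variable {R : Type*} [CommRing R] {n : ℕ}

private lemma det_one_update2 {N : Type*} [DecidableEq N] [Fintype N]
    (p q : N) (hpq : p ≠ q) (v w : N → R) :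
    (((1 : Matrix N N R).updateCol p v).updateCol q w).det
      = v p * w q - v q * w p := by
  have hB : ((1 : Matrix N N R).updateCol p v).updateCol q w
      = 1 + (Matrix.of fun i (t : Fin 2) =>
          if t = 0 then v i - (1 : Matrix N N R) i p else w i - (1 : Matrix N N R) i q) *
        (Matrix.of fun (t : Fin 2) j =>
          if t = 0 then (1 : Matrix N N R) p j else (1 : Matrix N N R) q j) := by
    ext i j
    simp only [Matrix.add_apply, Matrix.mul_apply, Fin.sum_univ_two, Matrix.of_apply,
      Matrix.updateCol_apply, Matrix.one_apply]
    by_cases h1 : j = q <;> by_cases h2 : j = p <;> by_cases h3 : i = j <;>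
      simp_all <;> ring_nf (config := { ifUnchanged := .silent }) <;> simp_all [eq_comm]
  rw [hB, Matrix.det_one_add_mul_comm, Matrix.det_fin_two]
  simp only [Matrix.add_apply, Matrix.mul_apply, Matrix.one_apply, Matrix.of_apply]
  simp [Finset.mul_sum, ite_mul, mul_ite, hpq, Ne.symm hpq]
  ring

private lemma updateCol_comm' {N : Type*} [DecidableEq N] (M : Matrix N N R) {p q : N}
    (h : p ≠ q) (v w : N → R) :
    (M.updateCol p v).updateCol q w = (M.updateCol q w).updateCol p v := by
  ext i j
  simp only [Matrix.updateCol_apply]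
  by_cases h1 : j = q <;> by_cases h2 : j = p <;> simp_all

private lemma det_update2_smul {N : Type*} [DecidableEq N] [Fintype N] (M : Matrix N N R)
    {p q : N} (h : p ≠ q) (c : R) (v w : N → R) :
    ((M.updateCol p (c • v)).updateCol q w).det
      = c * ((M.updateCol p v).updateCol q w).det := by
  rw [updateCol_comm' M h, Matrix.det_updateCol_smul, updateCol_comm' M h]

private lemma mulB (A : Matrix (Fin (n+2)) (Fin (n+2)) R) :
    A * (((1 : Matrix (Fin (n+2)) (Fin (n+2)) R).updateCol 0 (fun i => adjugate A i 0)).updateCol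
        (Fin.last (n+1)) (fun i => adjugate A i (Fin.last (n+1))))
      = (A.updateCol 0 (A.det • fun i => (1 : Matrix (Fin (n+2)) (Fin (n+2)) R) i 0)).updateCol
        (Fin.last (n+1)) (A.det • fun i => (1 : Matrix (Fin (n+2)) (Fin (n+2)) R) i (Fin.last (n+1))) := by
  have h0l : (0 : Fin (n+2)) ≠ Fin.last (n+1) := by
    intro h; have := congrArg Fin.val h; simp [Fin.last] at this
  ext i j
  rw [Matrix.mul_apply]
  by_cases hjl : j = Fin.last (n+1)
  · subst hjl
    have h := congrFun (congrFun (Matrix.mul_adjugate A) i) (Fin.last (n+1))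
    rw [Matrix.mul_apply] at h
    simp only [Matrix.updateCol_self, Matrix.updateCol_apply, if_pos rfl]
    simpa using h
  · by_cases hj0 : j = 0
    · subst hj0
      have h := congrFun (congrFun (Matrix.mul_adjugate A) i) 0
      rw [Matrix.mul_apply] at h
      simp only [Matrix.updateCol_apply, if_neg hjl, Matrix.updateCol_self,
        if_neg h0l, if_pos rfl]
      simpa using h
    · simp only [Matrix.updateCol_apply, if_neg hjl, if_neg hj0, Matrix.one_apply]
      simp [Finset.sum_ite_eq', mul_ite]

private lemma detD0 (A : Matrix (Fin (n+2)) (Fin (n+2)) R) :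
    ((A.updateCol 0 (fun i => (1 : Matrix (Fin (n+2)) (Fin (n+2)) R) i 0)).updateCol
        (Fin.last (n+1)) (fun i => (1 : Matrix (Fin (n+2)) (Fin (n+2)) R) i (Fin.last (n+1)))).det
      = (A.submatrix (fun i : Fin n => i.succ.castSucc) (fun i : Fin n => i.succ.castSucc)).det := by
  have h0l : (0 : Fin (n+2)) ≠ Fin.last (n+1) := by
    intro h; have := congrArg Fin.val h; simp [Fin.last] at this
  set M := (A.updateCol 0 (fun i => (1 : Matrix (Fin (n+2)) (Fin (n+2)) R) i 0)).updateCol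
      (Fin.last (n+1)) (fun i => (1 : Matrix (Fin (n+2)) (Fin (n+2)) R) i (Fin.last (n+1))) with hM
  have hcol0 : ∀ i, M i 0 = if i = 0 then 1 else 0 := by
    intro i
    simp [hM, Matrix.updateCol_apply, if_neg h0l, Matrix.one_apply]
  rw [Matrix.det_succ_column_zero]
  rw [Fintype.sum_eq_single (0 : Fin (n+2)) (fun i hi => by rw [hcol0]; simp [hi])]
  rw [hcol0 0, if_pos rfl]
  simp only [Fin.val_zero, pow_zero, one_mul, mul_one]
  have hsa : (0 : Fin (n+2)).succAbove = Fin.succ := by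
    funext i; exact Fin.zero_succAbove i
  rw [hsa]
  set E := M.submatrix Fin.succ (Fin.succ : Fin (n+1) → Fin (n+2)) with hE
  have hcoll : ∀ i, E i (Fin.last n) = if i = Fin.last n then 1 else 0 := by
    intro i
    have : (Fin.last n).succ = Fin.last (n+1) := by
      ext; simp [Fin.last]
    simp only [hE, Matrix.submatrix_apply, this, hM, Matrix.updateCol_self, Matrix.one_apply]
    by_cases h : i = Fin.last n
    · subst h; simp [this]
    · rw [if_neg, if_neg h]
      intro hc
      exact h (Fin.succ_injective _ (by rw [hc, this]))
  rw [Matrix.det_succ_column E (Fin.last n)]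
  rw [Fintype.sum_eq_single (Fin.last n) (fun i hi => by rw [hcoll]; simp [hi])]
  rw [hcoll, if_pos rfl]
  have hsign : ((-1 : R)) ^ ((Fin.last n : ℕ) + (Fin.last n : ℕ)) = 1 :=
    Even.neg_one_pow ⟨n, by simp [Fin.last]⟩
  rw [hsign, one_mul, one_mul]
  have hsal : (Fin.last n).succAbove = Fin.castSucc := Fin.succAbove_last
  rw [hsal]
  congr 1
  ext i j
  simp only [hE, hM, Matrix.submatrix_apply, Matrix.updateCol_apply]
  have hne1 : (Fin.castSucc j).succ ≠ Fin.last (n+1) := by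
    intro h; have := congrArg Fin.val h; simp [Fin.last] at this; omega
  have hne2 : (Fin.castSucc j).succ ≠ 0 := Fin.succ_ne_zero _
  rw [if_neg hne1, if_neg hne2]
  congr 1 <;> exact Fin.ext (by simp)

private lemma key (A : Matrix (Fin (n+2)) (Fin (n+2)) R) :
    A.det * ((A.submatrix Fin.castSucc Fin.castSucc).det * (A.submatrix Fin.succ Fin.succ).det
        - (A.submatrix Fin.succ Fin.castSucc).det * (A.submatrix Fin.castSucc Fin.succ).det)
      = A.det * (A.det * (A.submatrix (fun i : Fin n => i.succ.castSucc)
          (fun i : Fin n => i.succ.castSucc)).det) := by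
  have h0l : (0 : Fin (n+2)) ≠ Fin.last (n+1) := by
    intro h; have := congrArg Fin.val h; simp [Fin.last] at this
  set B := ((1 : Matrix (Fin (n+2)) (Fin (n+2)) R).updateCol 0 (fun i => adjugate A i 0)).updateCol
      (Fin.last (n+1)) (fun i => adjugate A i (Fin.last (n+1))) with hB
  have hdetB : B.det = (A.submatrix Fin.castSucc Fin.castSucc).det * (A.submatrix Fin.succ Fin.succ).det
      - (A.submatrix Fin.succ Fin.castSucc).det * (A.submatrix Fin.castSucc Fin.succ).det := by
    rw [hB, det_one_update2 _ _ h0l]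
    have hsa0 : (0 : Fin (n+2)).succAbove = Fin.succ := funext fun i => Fin.zero_succAbove i
    have hsal : (Fin.last (n+1)).succAbove = Fin.castSucc := Fin.succAbove_last
    have e1 : adjugate A 0 0 = (A.submatrix Fin.succ Fin.succ).det := by
      rw [Matrix.adjugate_fin_succ_eq_det_submatrix, hsa0]; simp
    have e2 : adjugate A (Fin.last (n+1)) (Fin.last (n+1))
        = (A.submatrix Fin.castSucc Fin.castSucc).det := by
      rw [Matrix.adjugate_fin_succ_eq_det_submatrix, hsal]
      rw [show ((Fin.last (n+1) : ℕ) + (Fin.last (n+1) : ℕ)) = (n+1)+(n+1) by simp [Fin.last]]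
      rw [Even.neg_one_pow ⟨n+1, rfl⟩, one_mul]
    have e3 : adjugate A (Fin.last (n+1)) 0
        = (-1 : R) ^ (n+1) * (A.submatrix Fin.succ Fin.castSucc).det := by
      rw [Matrix.adjugate_fin_succ_eq_det_submatrix, hsa0, hsal]
      simp [Fin.last]
    have e4 : adjugate A 0 (Fin.last (n+1))
        = (-1 : R) ^ (n+1) * (A.submatrix Fin.castSucc Fin.succ).det := by
      rw [Matrix.adjugate_fin_succ_eq_det_submatrix, hsa0, hsal]
      simp [Fin.last]
    rw [e1, e2, e3, e4]
    have hs : ((-1 : R)) ^ (n+1) * (-1 : R) ^ (n+1) = 1 := by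
      rw [← pow_add]; exact Even.neg_one_pow ⟨n+1, rfl⟩
    linear_combination (-(A.submatrix Fin.succ Fin.castSucc).det
      * (A.submatrix Fin.castSucc Fin.succ).det) * hs
  calc A.det * ((A.submatrix Fin.castSucc Fin.castSucc).det * (A.submatrix Fin.succ Fin.succ).det
        - (A.submatrix Fin.succ Fin.castSucc).det * (A.submatrix Fin.castSucc Fin.succ).det)
      = A.det * B.det := by rw [hdetB]
    _ = (A * B).det := (Matrix.det_mul A B).symm
    _ = A.det * (A.det * (A.submatrix (fun i : Fin n => i.succ.castSucc)
          (fun i : Fin n => i.succ.castSucc)).det) := by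
        rw [hB, mulB A, det_update2_smul _ h0l, Matrix.det_updateCol_smul, detD0 A]

end Block

private lemma key' {R : Type*} [CommRing R] {n : ℕ} (A : Matrix (Fin (n+2)) (Fin (n+2)) R) :
    A.det * (A.submatrix (fun i : Fin n => i.succ.castSucc)
        (fun i : Fin n => i.succ.castSucc)).det
      = (A.submatrix Fin.castSucc Fin.castSucc).det * (A.submatrix Fin.succ Fin.succ).det
        - (A.submatrix Fin.succ Fin.castSucc).det * (A.submatrix Fin.castSucc Fin.succ).det := by
  set X : Matrix (Fin (n+2)) (Fin (n+2)) (MvPolynomial (Fin (n+2) × Fin (n+2)) ℤ) :=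
    Matrix.of fun i j => MvPolynomial.X (i, j) with hXdef
  have hX : X.det ≠ 0 := by
    intro h
    have h2 := congrArg (MvPolynomial.eval (fun p : Fin (n+2) × Fin (n+2) =>
      if p.1 = p.2 then (1 : ℤ) else 0)) h
    rw [RingHom.map_det, RingHom.mapMatrix_apply] at h2
    have h3 : X.map (MvPolynomial.eval (fun p : Fin (n+2) × Fin (n+2) =>
        if p.1 = p.2 then (1 : ℤ) else 0)) = 1 := by
      ext i j
      simp [hXdef, Matrix.one_apply]
    rw [h3] at h2
    simp at h2
  have hcancel := mul_left_cancel₀ hX (key X).symm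
  set φ : MvPolynomial (Fin (n+2) × Fin (n+2)) ℤ →+* R :=
    MvPolynomial.eval₂Hom (Int.castRingHom R) (fun p => A p.1 p.2) with hφ
  have hmap : X.map φ = A := by
    ext i j
    simp [hXdef, hφ]
  have h4 := congrArg φ hcancel
  simp only [map_sub, _root_.map_mul, RingHom.map_det, RingHom.mapMatrix_apply,
    ← Matrix.submatrix_map, hmap] at h4
  exact h4

/-- The contiguous `k × k` submatrix of `A` whose upper-left corner is the
(0-based) entry `(i, j)`. -/
def block {R : Type*} [CommRing R] {n : ℕ} (A : Matrix (Fin n) (Fin n) R)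
    (i j k : ℕ) (hi : i + k ≤ n) (hj : j + k ≤ n) : Matrix (Fin k) (Fin k) R :=
  Matrix.of fun r c => A ⟨i + r.1, by omega⟩ ⟨j + c.1, by omega⟩

theorem desnanot_jacobi {R : Type*} [CommRing R] {n : ℕ} (hn : 2 ≤ n)
    (A : Matrix (Fin n) (Fin n) R) :
    A.det * (block A 1 1 (n - 2) (by omega) (by omega)).det
      = (block A 0 0 (n - 1) (by omega) (by omega)).det
          * (block A 1 1 (n - 1) (by omega) (by omega)).det
        - (block A 1 0 (n - 1) (by omega) (by omega)).det
          * (block A 0 1 (n - 1) (by omega) (by omega)).det := by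
  obtain ⟨m, rfl⟩ : ∃ m, n = m + 2 := ⟨n - 2, by omega⟩
  have e1 : ∀ h1 h2, block A 1 1 (m + 2 - 2) h1 h2
      = A.submatrix (fun i : Fin m => i.succ.castSucc) (fun i : Fin m => i.succ.castSucc) := by
    intro h1 h2
    ext r c
    show A _ _ = A _ _
    congr 1 <;> exact Fin.ext (by simp [Nat.add_comm])
  have e2 : ∀ h1 h2, block A 0 0 (m + 2 - 1) h1 h2
      = A.submatrix (Fin.castSucc : Fin (m+1) → Fin (m+2)) Fin.castSucc := by
    intro h1 h2
    ext r c
    show A _ _ = A _ _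
    congr 1 <;> exact Fin.ext (by simp)
  have e3 : ∀ h1 h2, block A 1 1 (m + 2 - 1) h1 h2
      = A.submatrix (Fin.succ : Fin (m+1) → Fin (m+2)) Fin.succ := by
    intro h1 h2
    ext r c
    show A _ _ = A _ _
    congr 1 <;> exact Fin.ext (by simp [Nat.add_comm])
  have e4 : ∀ h1 h2, block A 1 0 (m + 2 - 1) h1 h2
      = A.submatrix (Fin.succ : Fin (m+1) → Fin (m+2)) Fin.castSucc := by
    intro h1 h2
    ext r c
    show A _ _ = A _ _
    congr 1 <;> exact Fin.ext (by simp [Nat.add_comm])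
  have e5 : ∀ h1 h2, block A 0 1 (m + 2 - 1) h1 h2
      = A.submatrix (Fin.castSucc : Fin (m+1) → Fin (m+2)) Fin.succ := by
    intro h1 h2
    ext r c
    show A _ _ = A _ _
    congr 1 <;> exact Fin.ext (by simp [Nat.add_comm])
  rw [e1, e2, e3, e4, e5]
  exact key' A
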